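/- Let E be an invertible r×r complex matrix, H = E⁻¹Eᵀ, p ≥ 1, and a ∈ ℂʳ a vector with Hᵖa = a and such that for all integers k, aᵀEHᵏa = [k ≡ 0 (mod p)] + [k ≡ 1 (mod p)]. Define L = 1 − Σ_{k=1}^{p} Hᵏ a aᵀ E H⁻ᵏ. Then L commutes with H and satisfies (L − 1)(L + H⁻¹) = 0. -/

import Mathlib

open Matrix

namespace TelescopicAux

variable {r : ℕ}

lemma mul_vmv (M : Matrix (Fin r) (Fin r) ℂ) (x y : Fin r → ℂ) :
    M * vecMulVec x y = vecMulVec (M *ᵥ x) y := by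
  ext i j
  simp only [Matrix.mul_apply, vecMulVec_apply, Matrix.mulVec, dotProduct, Finset.sum_mul]
  exact Finset.sum_congr rfl fun l _ => by ring

lemma vmv_mul (x y : Fin r → ℂ) (M : Matrix (Fin r) (Fin r) ℂ) :
    vecMulVec x y * M = vecMulVec x (y ᵥ* M) := by
  ext i j
  simp only [Matrix.mul_apply, vecMulVec_apply, Matrix.vecMul, dotProduct, Finset.mul_sum]
  exact Finset.sum_congr rfl fun l _ => by ring

lemma vmv_vmv (x y z w : Fin r → ℂ) :
    vecMulVec x y * vecMulVec z w = (y ⬝ᵥ z) • vecMulVec x w := by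
  ext i j
  simp only [Matrix.mul_apply, vecMulVec_apply, Matrix.smul_apply, smul_eq_mul, dotProduct,
    Finset.sum_mul]
  exact Finset.sum_congr rfl fun l _ => by ring

lemma sum_Icc_one (p : ℕ) {M : Type*} [AddCommMonoid M] (f : ℕ → M) :
    ∑ k ∈ Finset.Icc 1 p, f k = ∑ k ∈ Finset.range p, f (k + 1) := by
  induction p with
  | zero => simp
  | succ n ih => rw [Finset.sum_Icc_succ_top (by omega), ih, Finset.sum_range_succ]

lemma sum_shift {p : ℕ} {M : Type*} [AddCommMonoid M] [IsCancelAdd M] (G : ℕ → M)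
    (hG : G p = G 0) : ∑ k ∈ Finset.range p, G (k + 1) = ∑ k ∈ Finset.range p, G k := by
  have h1 := Finset.sum_range_succ G p
  have h2 := Finset.sum_range_succ' G p
  rw [hG] at h1
  exact add_right_cancel (h2.symm.trans h1)

end TelescopicAux

open TelescopicAux

/-- Let `E` be an invertible complex matrix, `H = E⁻¹Eᵀ`, and `a` the charge vector of a
spherical orbit of period `p`: `Hᵖa = a` and `aᵀEHᵏa = [k ≡ 0 (p)] + [k ≡ 1 (p)]`.
Then the telescopic matrix `L = 1 - ∑_{k=1}^{p} Hᵏ a aᵀ E H⁻ᵏ` commutes with `H`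
and satisfies `(L - 1)(L + H⁻¹) = 0`. -/
theorem telescopic_commutes_and_quadratic (r p : ℕ) (hp : 1 ≤ p)
    (E : Matrix (Fin r) (Fin r) ℂ) (hE : IsUnit E.det)
    (H : Matrix (Fin r) (Fin r) ℂ) (hH : H = E⁻¹ * Eᵀ)
    (a : Fin r → ℂ)
    (ha : (H ^ (p : ℤ)).mulVec a = a)
    (horth : ∀ k : ℤ, a ⬝ᵥ E.mulVec ((H ^ k).mulVec a) =
      (if (k : ZMod p) = 0 then 1 else 0) + (if (k : ZMod p) = 1 then 1 else 0))
    (L : Matrix (Fin r) (Fin r) ℂ)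
    (hL : L = 1 - ∑ k ∈ Finset.Icc 1 p,
      vecMulVec ((H ^ (k : ℤ)).mulVec a) (vecMul a (E * H ^ (-(k : ℤ))))) :
    L * H = H * L ∧ (L - 1) * (L + H⁻¹) = 0 := by
  have hEt : IsUnit Eᵀ.det := by rwa [Matrix.det_transpose]
  have hHdet : IsUnit H.det := by
    have hd : H.det = Ring.inverse E.det * E.det := by
      rw [hH, Matrix.det_mul, Matrix.det_nonsing_inv, Matrix.det_transpose]
    rw [hd, Ring.inverse_mul_cancel _ hE]
    exact isUnit_one
  have hHTdet : IsUnit Hᵀ.det := by rwa [Matrix.det_transpose]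
  -- basic identities
  have hEH : E * H = Eᵀ := by
    rw [hH, ← Matrix.mul_assoc, Matrix.mul_nonsing_inv E hE, Matrix.one_mul]
  have hHinv : H⁻¹ = Eᵀ⁻¹ * E := by
    rw [hH, Matrix.mul_inv_rev, Matrix.nonsing_inv_nonsing_inv E hE]
  have hHT : Hᵀ * E = E * H⁻¹ := by
    rw [hH, Matrix.transpose_mul, Matrix.transpose_transpose, Matrix.transpose_nonsing_inv,
      Matrix.mul_inv_rev, Matrix.nonsing_inv_nonsing_inv E hE, Matrix.mul_assoc]
  have hHTinv : Hᵀ⁻¹ * E = E * H := by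
    have h1 : Hᵀ * (E * H) = E := by
      rw [← Matrix.mul_assoc, hHT, Matrix.mul_assoc, Matrix.nonsing_inv_mul H hHdet,
        Matrix.mul_one]
    calc Hᵀ⁻¹ * E = Hᵀ⁻¹ * (Hᵀ * (E * H)) := by rw [h1]
      _ = E * H := by rw [← Matrix.mul_assoc, Matrix.nonsing_inv_mul _ hHTdet, Matrix.one_mul]
  -- key conjugation identity
  have key2 : ∀ k : ℤ, (H ^ k)ᵀ * E = E * H ^ (-k) := by
    intro k
    induction k using Int.induction_on with
    | zero => simp
    | succ n ih =>
      have hn : (-(n + 1) : ℤ) = -1 + -n := by ring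
      rw [Matrix.zpow_add_one hHdet, Matrix.transpose_mul, Matrix.mul_assoc, ih,
        ← Matrix.mul_assoc, hHT, Matrix.mul_assoc, hn, Matrix.zpow_add hHdet,
        Matrix.zpow_neg_one, ← Matrix.mul_assoc]
    | pred n ih =>
      have hn : (-(-n - 1) : ℤ) = 1 + n := by ring
      rw [Matrix.zpow_sub_one hHdet, Matrix.transpose_mul, Matrix.mul_assoc, ih,
        Matrix.transpose_nonsing_inv, ← Matrix.mul_assoc, hHTinv, hn,
        Matrix.zpow_add hHdet, zpow_one, neg_neg, Matrix.mul_assoc]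
  -- the orbit vectors
  set u : ℤ → Fin r → ℂ := fun k => (H ^ k) *ᵥ a with hu_def
  have hu_add : ∀ j k : ℤ, (H ^ j) *ᵥ u k = u (j + k) := by
    intro j k
    simp only [hu_def, Matrix.mulVec_mulVec, ← Matrix.zpow_add hHdet]
  have hu_per : ∀ k : ℤ, u (k + p) = u k := by
    intro k
    rw [← hu_add k p]
    have : u (p : ℤ) = a := ha
    rw [this]
  have hw2 : ∀ j m : ℤ, (u j ᵥ* E) ᵥ* H ^ m = u (j - m) ᵥ* E := by
    intro j m
    have h1 : E * H ^ m = (H ^ (-m))ᵀ * E := by rw [key2, neg_neg]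
    rw [Matrix.vecMul_vecMul, h1, ← Matrix.vecMul_vecMul, Matrix.vecMul_transpose, hu_add]
    congr 1
    ring
  have hc : ∀ j k : ℤ, (u j ᵥ* E) ⬝ᵥ u k =
      (if ((k - j : ℤ) : ZMod p) = 0 then 1 else 0)
        + (if ((k - j : ℤ) : ZMod p) = 1 then 1 else 0) := by
    intro j k
    have h1 : u j ᵥ* E ⬝ᵥ u k = a ⬝ᵥ ((H ^ j)ᵀ * E * H ^ k) *ᵥ a := by
      rw [← Matrix.dotProduct_mulVec]
      have hj : u j = a ᵥ* (H ^ j)ᵀ := by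
        rw [Matrix.vecMul_transpose]
      rw [hj, ← Matrix.dotProduct_mulVec]
      simp only [hu_def, Matrix.mulVec_mulVec, Matrix.mul_assoc]
    rw [h1, key2, Matrix.mul_assoc, ← Matrix.zpow_add hHdet]
    have h2 : -j + k = k - j := by ring
    rw [h2, ← Matrix.mulVec_mulVec, horth (k - j)]
  -- rewrite L using range p
  have hLS : L = 1 - ∑ k ∈ Finset.range p, vecMulVec (u (k + 1)) (u (k + 1) ᵥ* E) := by
    rw [hL]
    congr 1
    rw [sum_Icc_one]
    refine Finset.sum_congr rfl fun k _ => ?_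
    have hcast : ((k + 1 : ℕ) : ℤ) = (k : ℤ) + 1 := by push_cast; ring
    rw [hcast]
    congr 1
    have h1 : E * H ^ (-((k : ℤ) + 1)) = (H ^ ((k : ℤ) + 1))ᵀ * E := (key2 _).symm
    rw [h1, ← Matrix.vecMul_vecMul, Matrix.vecMul_transpose]
  set S : Matrix (Fin r) (Fin r) ℂ :=
    ∑ k ∈ Finset.range p, vecMulVec (u (k + 1)) (u (k + 1) ᵥ* E) with hS_def
  -- commutation
  have hup1 : u ((p : ℤ) + 1) = u 1 := by rw [add_comm]; exact hu_per 1
  have hup0 : u (p : ℤ) = u 0 := by have := hu_per 0; rwa [zero_add] at this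
  have hSH : S * H = ∑ k ∈ Finset.range p, vecMulVec (u (k + 1)) (u k ᵥ* E) := by
    rw [hS_def, Finset.sum_mul]
    refine Finset.sum_congr rfl fun k _ => ?_
    rw [vmv_mul]
    have : (u ((k : ℤ) + 1) ᵥ* E) ᵥ* H = (u ((k : ℤ) + 1) ᵥ* E) ᵥ* H ^ (1 : ℤ) := by
      rw [zpow_one]
    rw [this, hw2, add_sub_cancel_right]
  have hHS : H * S = ∑ k ∈ Finset.range p, vecMulVec (u (k + 1 + 1)) (u (k + 1) ᵥ* E) := by
    rw [hS_def, Finset.mul_sum]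
    refine Finset.sum_congr rfl fun k _ => ?_
    rw [mul_vmv]
    have : H *ᵥ u ((k : ℤ) + 1) = (H ^ (1 : ℤ)) *ᵥ u ((k : ℤ) + 1) := by rw [zpow_one]
    rw [this, hu_add]
    congr 2
    ring
  have hcomm : S * H = H * S := by
    rw [hSH, hHS]
    have hG : (fun m : ℕ => vecMulVec (u (m + 1)) (u m ᵥ* E)) p
        = (fun m : ℕ => vecMulVec (u (m + 1)) (u m ᵥ* E)) 0 := by
      simp only
      rw [hup0, hup1]
      norm_num
    have hs := sum_shift (p := p) (fun m : ℕ => vecMulVec (u (m + 1)) (u m ᵥ* E)) hG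
    rw [← hs]
    refine Finset.sum_congr rfl fun k _ => ?_
    rw [show ((k + 1 : ℕ) : ℤ) = (k : ℤ) + 1 from by push_cast; ring]
  -- the quadratic identity
  haveI : NeZero p := ⟨by omega⟩
  have hSHinv : S * H⁻¹ = ∑ k ∈ Finset.range p, vecMulVec (u (k + 1)) (u (k + 2) ᵥ* E) := by
    rw [hS_def, Finset.sum_mul]
    refine Finset.sum_congr rfl fun k _ => ?_
    rw [vmv_mul, ← Matrix.zpow_neg_one H, hw2,
      show (k : ℤ) + 1 - -1 = (k : ℤ) + 2 from by ring]
  have hinner : ∀ j ∈ Finset.range p,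
      ∑ k ∈ Finset.range p, vecMulVec (u (j + 1)) (u (j + 1) ᵥ* E)
        * vecMulVec (u (k + 1)) (u (k + 1) ᵥ* E)
      = vecMulVec (u (j + 1)) (u (j + 1) ᵥ* E)
        + vecMulVec (u (j + 1)) (u (j + 2) ᵥ* E) := by
    intro j hj
    have hjp : j < p := Finset.mem_range.mp hj
    have h0 : ∀ k : ℕ, k < p → (((k : ZMod p) = (j : ZMod p)) ↔ k = j) := by
      intro k hkp
      rw [ZMod.natCast_eq_natCast_iff]
      show k % p = j % p ↔ k = j
      rw [Nat.mod_eq_of_lt hkp, Nat.mod_eq_of_lt hjp]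
    have h1 : ∀ k : ℕ, k < p → (((k : ZMod p) = 1 + (j : ZMod p)) ↔ k = (j + 1) % p) := by
      intro k hkp
      have hx : (1 + (j : ZMod p)) = ((j + 1 : ℕ) : ZMod p) := by push_cast; ring
      rw [hx, ZMod.natCast_eq_natCast_iff]
      show k % p = (j + 1) % p ↔ k = (j + 1) % p
      rw [Nat.mod_eq_of_lt hkp]
    calc ∑ k ∈ Finset.range p, vecMulVec (u (j + 1)) (u (j + 1) ᵥ* E)
          * vecMulVec (u (k + 1)) (u (k + 1) ᵥ* E)
        = ∑ k ∈ Finset.range p,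
            ((if k = j then vecMulVec (u (j + 1)) (u (k + 1) ᵥ* E) else 0)
              + (if k = (j + 1) % p then vecMulVec (u (j + 1)) (u (k + 1) ᵥ* E) else 0)) := by
          refine Finset.sum_congr rfl fun k hk => ?_
          have hkp : k < p := Finset.mem_range.mp hk
          rw [vmv_vmv, hc]
          have hcast : (((k : ℤ) + 1 - ((j : ℤ) + 1) : ℤ) : ZMod p)
              = (k : ZMod p) - (j : ZMod p) := by push_cast; ring
          simp only [hcast, sub_eq_iff_eq_add, zero_add, h0 k hkp, h1 k hkp]
          rw [add_smul, ite_smul, ite_smul, one_smul, zero_smul]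
      _ = vecMulVec (u (j + 1)) (u (j + 1) ᵥ* E)
            + vecMulVec (u (j + 1)) (u (((j + 1) % p : ℕ) + 1) ᵥ* E) := by
          rw [Finset.sum_add_distrib, Finset.sum_ite_eq', Finset.sum_ite_eq', if_pos hj,
            if_pos (Finset.mem_range.mpr (Nat.mod_lt _ (by omega)))]
      _ = vecMulVec (u (j + 1)) (u (j + 1) ᵥ* E)
            + vecMulVec (u (j + 1)) (u (j + 2) ᵥ* E) := by
          congr 2
          rcases Nat.lt_or_ge (j + 1) p with h | h
          · rw [Nat.mod_eq_of_lt h,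
              show ((j + 1 : ℕ) : ℤ) + 1 = (j : ℤ) + 2 from by push_cast; ring]
          · have hjp1 : j + 1 = p := by omega
            rw [hjp1, Nat.mod_self]
            have hz : ((j : ℤ) + 2) = 1 + ((p : ℕ) : ℤ) := by
              rw [← hjp1]; push_cast; ring
            rw [hz, hu_per 1]
            norm_num
  have hmain : S * S = S + S * H⁻¹ := by
    calc S * S = ∑ j ∈ Finset.range p, ∑ k ∈ Finset.range p,
          vecMulVec (u (j + 1)) (u (j + 1) ᵥ* E)
            * vecMulVec (u (k + 1)) (u (k + 1) ᵥ* E) := by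
          rw [hS_def]; exact Finset.sum_mul_sum _ _ _ _
      _ = ∑ j ∈ Finset.range p, (vecMulVec (u (j + 1)) (u (j + 1) ᵥ* E)
            + vecMulVec (u (j + 1)) (u (j + 2) ᵥ* E)) := Finset.sum_congr rfl hinner
      _ = S + S * H⁻¹ := by
          rw [Finset.sum_add_distrib, ← hS_def, ← hSHinv]
  -- conclude
  constructor
  · rw [hLS, Matrix.sub_mul, Matrix.mul_sub, Matrix.one_mul, Matrix.mul_one, hcomm]
  · rw [hLS]
    have hq : (1 - S - 1) * (1 - S + H⁻¹) = S * S - (S + S * H⁻¹) := by noncomm_ring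
    rw [hq, hmain, sub_self]
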